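/- Let 𝒜' and 𝒜 be abelian categories and i : 𝒜' → 𝒜 a fully faithful exact functor whose essential image is a Serre subcategory of 𝒜, and suppose i admits an exact right adjoint. If X ∈ 𝒜' and Q ∈ 𝒜 satisfies Hom_𝒜(iY, Q) = 0 and Hom_𝒜(Q, iY) = 0 for all Y ∈ 𝒜', then Ext^r_𝒜(iX, Q) = 0 for all r ≥ 0. -/

import Mathlib

open CategoryTheory Limits Abelian ZeroObject

universe w v' v u' u

/-- Proposition D.1.9 (2), Ext-vanishing: if `i : 𝒜' ⥤ 𝒜` is fully faithful exact with
Serre essential image and admits an exact right adjoint, and if `Q ∈ 𝒜` satisfies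
`Hom(i Y, Q) = 0 = Hom(Q, i Y)` for all `Y ∈ 𝒜'`, then `Ext^r(i X, Q) = 0` for all
`X ∈ 𝒜'` and all `r ≥ 0`. -/
theorem stmt_13 {A' : Type u'} {A : Type u} [Category.{v'} A'] [Category.{v} A]
    [Abelian A'] [Abelian A] [HasExt.{w} A]
    (i : A' ⥤ A) [i.Full] [i.Faithful]
    [PreservesFiniteLimits i] [PreservesFiniteColimits i]
    (hSerre : ∀ (S : ShortComplex A), S.ShortExact →
        (i.essImage S.X₂ ↔ (i.essImage S.X₁ ∧ i.essImage S.X₃)))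
    (hadj : ∃ p : A ⥤ A', Nonempty (i ⊣ p) ∧
        Nonempty (PreservesFiniteLimits p) ∧ Nonempty (PreservesFiniteColimits p))
    (Q : A)
    (hQ₁ : ∀ (Y : A') (g : i.obj Y ⟶ Q), g = 0)
    (hQ₂ : ∀ (Y : A') (g : Q ⟶ i.obj Y), g = 0)
    (X : A') (r : ℕ) (e : Ext (i.obj X) Q r) :
    e = 0 := by
  classical
  obtain ⟨p, ⟨adj⟩, ⟨hp₁⟩, ⟨hp₂⟩⟩ := hadj
  haveI := hp₁
  haveI := hp₂
  haveI : i.IsLeftAdjoint := ⟨p, ⟨adj⟩⟩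
  haveI : p.IsRightAdjoint := ⟨i, ⟨adj⟩⟩
  haveI : i.Additive := Functor.additive_of_preserves_binary_products i
  haveI : p.Additive := Functor.additive_of_preserves_binary_products p
  haveI : PreservesFiniteLimits (p ⋙ i) := comp_preservesFiniteLimits p i
  haveI : PreservesFiniteColimits (p ⋙ i) := comp_preservesFiniteColimits p i
  letI := HasDerivedCategory.standard A
  -- the key vanishing/isomorphism properties of the counit
  have hzero : ∀ (Z : A) (g : i.obj (p.obj Z) ⟶ Z),
      (IsZero Z ∨ Nonempty (Z ≅ Q)) → g = 0 := by
    rintro Z g (hZ | he)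
    · exact hZ.eq_of_tgt _ _
    · obtain ⟨e₀⟩ := he
      have : g = (g ≫ e₀.hom) ≫ e₀.inv := by simp
      rw [this, hQ₁ (p.obj Z) (g ≫ e₀.hom), zero_comp]
  have hiso : ∀ (Z : A) (W : A') (e₀ : Z ≅ i.obj W),
      IsIso (adj.counit.app Z) := fun Z W e₀ => adj.isIso_counit_app_of_iso e₀
  -- the natural transformation on cochain complexes induced by the counit
  let ψ : (p ⋙ i).mapHomologicalComplex (ComplexShape.up ℤ) ⟶ 𝟭 _ :=
    { app := fun K =>
        { f := fun n => adj.counit.app (K.X n)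
          comm' := fun a b _ => by simp; exact (adj.counit.naturality (K.d a b)).symm }
      naturality := fun K L f => by
        ext n
        simp; exact adj.counit.naturality (f.f n) }
  -- lift it to the derived category
  let τ : (p ⋙ i).mapHomologicalComplex (ComplexShape.up ℤ) ⋙ DerivedCategory.Q ⟶
      DerivedCategory.Q := Functor.whiskerRight ψ DerivedCategory.Q ≫ DerivedCategory.Q.leftUnitor.hom
  let θ : (p ⋙ i).mapDerivedCategory ⟶ 𝟭 (DerivedCategory A) :=
    Localization.liftNatTrans DerivedCategory.Q
      (HomologicalComplex.quasiIso A (ComplexShape.up ℤ)) _ _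
      (p ⋙ i).mapDerivedCategory (𝟭 _) τ
  have hθapp : ∀ K : CochainComplex A ℤ,
      θ.app (DerivedCategory.Q.obj K) =
        (Localization.Lifting.iso DerivedCategory.Q
            (HomologicalComplex.quasiIso A (ComplexShape.up ℤ)) _
            (p ⋙ i).mapDerivedCategory).hom.app K ≫ τ.app K ≫
          (Localization.Lifting.iso DerivedCategory.Q
            (HomologicalComplex.quasiIso A (ComplexShape.up ℤ)) _
            (𝟭 (DerivedCategory A))).inv.app K :=
    fun K => Localization.liftNatTrans_app _ _ _ _ _ _ _ _
  -- the relevant complexes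
  let K₁ : CochainComplex A ℤ :=
    (HomologicalComplex.single A (ComplexShape.up ℤ) 0).obj (i.obj X)
  let K₀ : CochainComplex A ℤ :=
    (HomologicalComplex.single A (ComplexShape.up ℤ) 0).obj Q
  let K₂ : CochainComplex A ℤ := K₀⟦(r : ℤ)⟧
  -- ψ is an isomorphism at K₁
  have hK₁ : ∀ n : ℤ, IsIso ((ψ.app K₁).f n) := by
    intro n
    by_cases hn : n = 0
    · subst hn
      exact hiso _ X (HomologicalComplex.singleObjXSelf (ComplexShape.up ℤ) 0 (i.obj X))
    · exact hiso _ (0 : A')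
        ((HomologicalComplex.isZero_single_obj_X (ComplexShape.up ℤ) 0 (i.obj X) n
          hn).iso (i.map_isZero (isZero_zero A')))
  haveI : ∀ n : ℤ, IsIso ((ψ.app K₁).f n) := hK₁
  haveI : IsIso (ψ.app K₁) := HomologicalComplex.Hom.isIso_of_components _
  -- ψ vanishes at K₂
  have hK₂ : ψ.app K₂ = 0 := by
    ext n
    show adj.counit.app (K₂.X n) = 0
    refine hzero _ _ ?_
    by_cases hn : n + (r : ℤ) = 0
    · exact Or.inr ⟨eqToIso (congrArg K₀.X hn) ≪≫
        HomologicalComplex.singleObjXSelf (ComplexShape.up ℤ) 0 Q⟩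
    · exact Or.inl
        (HomologicalComplex.isZero_single_obj_X (ComplexShape.up ℤ) 0 Q _ hn)
  -- consequences for θ
  haveI hθ₁ : IsIso (θ.app (DerivedCategory.Q.obj K₁)) := by
    rw [hθapp]
    have h : τ.app K₁ = DerivedCategory.Q.map (ψ.app K₁) := by
      simp [τ]
    have : IsIso (τ.app K₁) := by rw [h]; infer_instance
    infer_instance
  have hθ₂ : θ.app (DerivedCategory.Q.obj K₂) = 0 := by
    rw [hθapp]
    have : τ.app K₂ = 0 := by
      have h : τ.app K₂ = DerivedCategory.Q.map (ψ.app K₂) := by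
        simp [τ]
      rw [h, hK₂, Functor.map_zero]
    rw [this, zero_comp, comp_zero]
  -- identify single functor objects with Q.obj of single complexes
  let sIso : DerivedCategory.singleFunctor A 0 ≅
      HomologicalComplex.single A (ComplexShape.up ℤ) 0 ⋙ DerivedCategory.Q :=
    { hom := (DerivedCategory.singleFunctorsPostcompQIso A).hom.hom 0
      inv := (DerivedCategory.singleFunctorsPostcompQIso A).inv.hom 0
      hom_inv_id := SingleFunctors.hom_inv_id_hom _ 0
      inv_hom_id := SingleFunctors.inv_hom_id_hom _ 0 }
  let a : (DerivedCategory.singleFunctor A 0).obj (i.obj X) ≅ DerivedCategory.Q.obj K₁ :=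
    sIso.app (i.obj X)
  let b : ((DerivedCategory.singleFunctor A 0).obj Q)⟦(r : ℤ)⟧ ≅ DerivedCategory.Q.obj K₂ :=
    (shiftFunctor (DerivedCategory A) (r : ℤ)).mapIso (sIso.app Q) ≪≫
      ((DerivedCategory.Q.commShiftIso (r : ℤ)).app K₀).symm
  -- naturality gives: θ is iso at single (i X) and zero at (single Q)⟦r⟧
  have hnat : ∀ {U V : DerivedCategory A} (g : U ⟶ V),
      θ.app U ≫ g = (p ⋙ i).mapDerivedCategory.map g ≫ θ.app V := by
    intro U V g
    simpa using θ.naturality g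
  have ha : θ.app ((DerivedCategory.singleFunctor A 0).obj (i.obj X)) =
      (p ⋙ i).mapDerivedCategory.map a.hom ≫ θ.app (DerivedCategory.Q.obj K₁) ≫ a.inv := by
    rw [← Category.assoc, ← hnat a.hom, Category.assoc, Iso.hom_inv_id, Category.comp_id]
  have hb : θ.app (((DerivedCategory.singleFunctor A 0).obj Q)⟦(r : ℤ)⟧) = 0 := by
    have : θ.app (((DerivedCategory.singleFunctor A 0).obj Q)⟦(r : ℤ)⟧) =
        (p ⋙ i).mapDerivedCategory.map b.hom ≫ θ.app (DerivedCategory.Q.obj K₂) ≫ b.inv := by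
      rw [← Category.assoc, ← hnat b.hom, Category.assoc, Iso.hom_inv_id, Category.comp_id]
    rw [this, hθ₂, zero_comp, comp_zero]
  haveI : IsIso (θ.app ((DerivedCategory.singleFunctor A 0).obj (i.obj X))) := by
    rw [ha]
    infer_instance
  -- conclude
  apply Ext.ext
  rw [Ext.zero_hom]
  have key := hnat e.hom
  rw [hb, comp_zero] at key
  exact (cancel_epi (θ.app ((DerivedCategory.singleFunctor A 0).obj (i.obj X)))).mp
    (by rw [key, comp_zero])
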